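/- Let h ∈ ℕ and W(a) := 1_{[−2h,2h]}(a)·max(2h−3|a|, |a|−2h). Then for every integer ℓ ≥ 1, Σ_{a≠0} W(aℓ) ≪ h, with an absolute implied constant (uniformly in ℓ). -/

import Mathlib

open Finset

noncomputable section

/-- The weight `W(a) = 1_{[-2h,2h]}(a) · max(2h - 3|a|, |a| - 2h)`. -/
def Wt (h : ℕ) (a : ℤ) : ℝ :=
  if |a| ≤ 2 * (h : ℤ) then max (2 * (h : ℝ) - 3 * |(a : ℝ)|) (|(a : ℝ)| - 2 * (h : ℝ)) else 0

set_option maxHeartbeats 1000000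

/-- Integer-valued version of the weight. -/
def Vt (h : ℕ) (b : ℤ) : ℤ :=
  if |b| ≤ 2 * (h : ℤ) then 2 * |(|b| - (h:ℤ))| - |b| else 0

lemma max_id (H x : ℝ) : max (2*H - 3*x) (x - 2*H) = 2*|x - H| - x := by
  rcases le_total x H with h1 | h1
  · rw [abs_of_nonpos (by linarith), max_eq_left (by linarith)]; ring
  · rw [abs_of_nonneg (by linarith), max_eq_right (by linarith)]; ring

lemma wt_eq (h : ℕ) (b : ℤ) : Wt h b = (Vt h b : ℝ) := by
  unfold Wt Vt
  split
  · have hx : |(b : ℝ)| = ((|b| : ℤ) : ℝ) := (Int.cast_abs (a := b)).symm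
    rw [hx, max_id]
    push_cast
    ring
  · simp

lemma wt_neg (h : ℕ) (b : ℤ) : Wt h (-b) = Wt h b := by
  unfold Wt
  push_cast
  rw [abs_neg, abs_neg]

lemma sum_sym (N : ℤ) (g : ℤ → ℝ) (hg : ∀ a, g (-a) = g a) :
    ∑ a ∈ (Finset.Icc (-N) N).filter (· ≠ 0), g a = 2 * ∑ a ∈ Finset.Icc 1 N, g a := by
  have hset : (Finset.Icc (-N) N).filter (· ≠ 0) = Finset.Icc (-N) (-1) ∪ Finset.Icc 1 N := by
    ext a
    simp only [mem_filter, mem_union, mem_Icc, ne_eq]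
    omega
  have hdisj : Disjoint (Finset.Icc (-N) (-1)) (Finset.Icc 1 N) := by
    rw [Finset.disjoint_left]
    intro a ha hb
    simp only [mem_Icc] at ha hb
    omega
  rw [hset, Finset.sum_union hdisj]
  have hneg : ∑ a ∈ Finset.Icc (-N) (-1), g a = ∑ a ∈ Finset.Icc 1 N, g a := by
    apply Finset.sum_nbij' (i := fun a => -a) (j := fun a => -a)
    · intro a ha; simp only [mem_Icc] at *; omega
    · intro a ha; simp only [mem_Icc] at *; omega
    · intro a _; ring
    · intro a _; ring
    · intro a _; rw [hg]
  linarith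

lemma sum_cast (n : ℕ) (g : ℤ → ℝ) :
    ∑ a ∈ Finset.Icc (1:ℤ) (n:ℤ), g a = ∑ a ∈ Finset.Icc 1 n, g (a:ℤ) := by
  have himg : Finset.Icc (1:ℤ) (n:ℤ) = (Finset.Icc 1 n).image (Nat.cast : ℕ → ℤ) := by
    ext a
    simp only [mem_Icc, mem_image]
    constructor
    · intro ha; exact ⟨a.toNat, by omega, by omega⟩
    · rintro ⟨b, hb, rfl⟩; omega
  rw [himg, Finset.sum_image]
  intro a _ b _ hab
  exact_mod_cast hab

lemma gauss : ∀ n : ℕ, 2 * ∑ a ∈ Finset.Icc 1 n, (a:ℤ) = n*(n+1) := by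
  intro n
  induction n with
  | zero => simp
  | succ n ih =>
    rw [Finset.sum_Icc_succ_top (by omega)]
    push_cast
    push_cast at ih
    ring_nf
    ring_nf at ih
    linarith

lemma key (h ℓ : ℕ) (hℓ : 1 ≤ ℓ) :
    |∑ a ∈ Finset.Icc 1 (2*h), Vt h ((a:ℤ) * ℓ)| ≤ 2*(h:ℤ) := by
  have hℓ' : 0 < ℓ := hℓ
  set k := h / ℓ with hk
  set m := 2*h / ℓ with hm
  have hk1 : k * ℓ ≤ h := Nat.div_mul_le_self h ℓ
  have hk2 : h < (k+1) * ℓ := by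
    rw [← Nat.div_lt_iff_lt_mul hℓ']; omega
  have hm1 : m * ℓ ≤ 2*h := Nat.div_mul_le_self _ ℓ
  have hm2 : 2*h < (m+1) * ℓ := by
    rw [← Nat.div_lt_iff_lt_mul hℓ']; omega
  have hkm : k ≤ m := Nat.div_le_div_right (by omega)
  have hmh : m ≤ 2*h := Nat.div_le_self _ _
  have hmcase : m = 2*k ∨ m = 2*k + 1 := by
    have h1 : 2*k ≤ m := by
      rw [hm, Nat.le_div_iff_mul_le hℓ']
      calc 2*k*ℓ = 2*(k*ℓ) := by ring
      _ ≤ 2*h := by omega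
    have h2 : m < 2*k + 2 := by
      have : m * ℓ < (2*k+2) * ℓ := by
        calc m * ℓ ≤ 2*h := hm1
        _ < 2*((k+1)*ℓ) := by omega
        _ = (2*k+2)*ℓ := by ring
      exact Nat.lt_of_mul_lt_mul_right this
    omega
  clear_value k m
  -- Step A : reduce to Icc 1 m
  have hstepA : ∑ a ∈ Finset.Icc 1 (2*h), Vt h ((a:ℤ) * ℓ)
      = ∑ a ∈ Finset.Icc 1 m, (2 * |(a:ℤ)*ℓ - h| - (a:ℤ)*ℓ) := by
    have hsplit : Finset.Icc 1 (2*h) = Finset.Icc 1 m ∪ Finset.Icc (m+1) (2*h) := by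
      ext a; simp only [mem_Icc, mem_union]; omega
    have hdisj : Disjoint (Finset.Icc 1 m) (Finset.Icc (m+1) (2*h)) := by
      rw [Finset.disjoint_left]; intro a ha hb
      simp only [mem_Icc] at ha hb; omega
    rw [hsplit, Finset.sum_union hdisj]
    have hz : ∑ a ∈ Finset.Icc (m+1) (2*h), Vt h ((a:ℤ) * ℓ) = 0 := by
      apply Finset.sum_eq_zero
      intro a ha
      simp only [mem_Icc] at ha
      have hgt : 2*h < a * ℓ := by
        have := (Nat.div_lt_iff_lt_mul hℓ').mp (show 2*h/ℓ < a by omega)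
        omega
      have hgt' : 2*(h:ℤ) < (a:ℤ) * ℓ := by exact_mod_cast hgt
      unfold Vt
      rw [abs_of_nonneg (by positivity), if_neg (by omega)]
    rw [hz, add_zero]
    apply Finset.sum_congr rfl
    intro a ha
    simp only [mem_Icc] at ha
    have hle : a * ℓ ≤ 2*h := by
      have := (Nat.le_div_iff_mul_le hℓ').mp (show a ≤ 2*h/ℓ by omega)
      omega
    have hle' : (a:ℤ) * ℓ ≤ 2*(h:ℤ) := by exact_mod_cast hle
    unfold Vt
    rw [abs_of_nonneg (by positivity), if_pos hle']
  rw [hstepA]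
  -- Step B : split at k and rewrite pointwise
  have hsplit2 : Finset.Icc 1 m = Finset.Icc 1 k ∪ Finset.Icc (k+1) m := by
    ext a; simp only [mem_Icc, mem_union]; omega
  have hdisj2 : Disjoint (Finset.Icc 1 k) (Finset.Icc (k+1) m) := by
    rw [Finset.disjoint_left]; intro a ha hb
    simp only [mem_Icc] at ha hb; omega
  rw [hsplit2, Finset.sum_union hdisj2]
  have e1 : ∑ a ∈ Finset.Icc 1 k, (2 * |(a:ℤ)*ℓ - h| - (a:ℤ)*ℓ)
      = ∑ a ∈ Finset.Icc 1 k, (2*(h:ℤ) - 3*ℓ*(a:ℤ)) := by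
    apply Finset.sum_congr rfl
    intro a ha
    simp only [mem_Icc] at ha
    have h1 : a * ℓ ≤ h := le_trans (Nat.mul_le_mul_right ℓ ha.2) hk1
    have h1' : (a:ℤ) * ℓ ≤ (h:ℤ) := by exact_mod_cast h1
    rw [abs_of_nonpos (by linarith)]
    ring
  have e2 : ∑ a ∈ Finset.Icc (k+1) m, (2 * |(a:ℤ)*ℓ - h| - (a:ℤ)*ℓ)
      = ∑ a ∈ Finset.Icc (k+1) m, ((ℓ:ℤ)*(a:ℤ) - 2*(h:ℤ)) := by
    apply Finset.sum_congr rfl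
    intro a ha
    simp only [mem_Icc] at ha
    have h1 : h < a * ℓ := lt_of_lt_of_le hk2 (Nat.mul_le_mul_right ℓ ha.1)
    have h1' : (h:ℤ) < (a:ℤ) * ℓ := by exact_mod_cast h1
    rw [abs_of_nonneg (by linarith)]
    ring
  rw [e1, e2]
  -- evaluate linear sums
  have hc1 : (Finset.Icc 1 k).card = k := by rw [Nat.card_Icc]; omega
  have hc2 : (Finset.Icc (k+1) m).card = m - k := by rw [Nat.card_Icc]; omega
  have hA : 2 * ∑ a ∈ Finset.Icc 1 k, (a:ℤ) = k*(k+1) := gauss k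
  have hB : 2 * ∑ a ∈ Finset.Icc (k+1) m, (a:ℤ) = (m:ℤ)*(m+1) - k*(k+1) := by
    have hG2 : 2 * ∑ a ∈ Finset.Icc 1 m, (a:ℤ) = m*(m+1) := gauss m
    rw [hsplit2, Finset.sum_union hdisj2] at hG2
    linarith [hA, hG2]
  have eS1 : ∑ a ∈ Finset.Icc 1 k, (2*(h:ℤ) - 3*(ℓ:ℤ)*(a:ℤ))
      = (k:ℤ) * (2*(h:ℤ)) - 3*(ℓ:ℤ) * ∑ a ∈ Finset.Icc 1 k, (a:ℤ) := by
    rw [Finset.sum_sub_distrib, Finset.sum_const, ← Finset.mul_sum, hc1, nsmul_eq_mul]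
  have eS2 : ∑ a ∈ Finset.Icc (k+1) m, ((ℓ:ℤ)*(a:ℤ) - 2*(h:ℤ))
      = (ℓ:ℤ) * (∑ a ∈ Finset.Icc (k+1) m, (a:ℤ)) - ((m:ℤ) - (k:ℤ)) * (2*(h:ℤ)) := by
    rw [Finset.sum_sub_distrib, Finset.sum_const, ← Finset.mul_sum, hc2, nsmul_eq_mul,
      Nat.cast_sub hkm]
  rw [eS1, eS2]
  -- final arithmetic
  have hk1' : (k:ℤ) * ℓ ≤ (h:ℤ) := by exact_mod_cast hk1
  have hk2' : (h:ℤ) < ((k:ℤ)+1) * ℓ := by exact_mod_cast hk2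
  have hpos : (0:ℤ) ≤ (ℓ:ℤ) * k := by positivity
  rw [abs_le]
  rcases hmcase with hcase | hcase
  · have hm' : (m:ℤ) = 2*(k:ℤ) := by exact_mod_cast hcase
    rw [hm'] at hB ⊢
    have key2 : 2 * ((k:ℤ) * (2*(h:ℤ)) - 3*(ℓ:ℤ) * ∑ a ∈ Finset.Icc 1 k, (a:ℤ)
        + ((ℓ:ℤ) * (∑ a ∈ Finset.Icc (k+1) m, (a:ℤ)) - (2*(k:ℤ) - (k:ℤ)) * (2*(h:ℤ))))
        = -2 * ((ℓ:ℤ) * k) := by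
      linear_combination (-3*(ℓ:ℤ)) * hA + (ℓ:ℤ) * hB
    constructor <;> linarith
  · have hm' : (m:ℤ) = 2*(k:ℤ)+1 := by exact_mod_cast hcase
    have hℓ2h : (ℓ:ℤ) ≤ 2*(h:ℤ) := by
      have h0 : ℓ ≤ m * ℓ := Nat.le_mul_of_pos_left ℓ (by omega)
      exact_mod_cast le_trans h0 hm1
    rw [hm'] at hB ⊢
    have key2 : 2 * ((k:ℤ) * (2*(h:ℤ)) - 3*(ℓ:ℤ) * ∑ a ∈ Finset.Icc 1 k, (a:ℤ)
        + ((ℓ:ℤ) * (∑ a ∈ Finset.Icc (k+1) m, (a:ℤ)) - ((2*(k:ℤ)+1) - (k:ℤ)) * (2*(h:ℤ))))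
        = 2 * ((ℓ:ℤ) * ((k:ℤ)+1) - 2*(h:ℤ)) := by
      linear_combination (-3*(ℓ:ℤ)) * hA + (ℓ:ℤ) * hB
    constructor <;> nlinarith [hk1', hk2', hℓ2h]

theorem statement12 :
    ∃ C : ℝ, 0 < C ∧ ∀ h ℓ : ℕ, 1 ≤ ℓ →
      |∑ a ∈ (Finset.Icc (-(2 * (h : ℤ))) (2 * (h : ℤ))).filter (· ≠ 0),
          Wt h (a * (ℓ : ℤ))| ≤ C * (h : ℝ) := by
  refine ⟨10, by norm_num, ?_⟩
  intro h ℓ hℓ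
  have hg : ∀ a : ℤ, Wt h (-a * (ℓ:ℤ)) = Wt h (a * (ℓ:ℤ)) := by
    intro a
    rw [neg_mul, wt_neg]
  rw [sum_sym (2 * (h:ℤ)) (fun a => Wt h (a * (ℓ:ℤ))) hg]
  have hcast : (2 * (h:ℤ)) = ((2*h : ℕ) : ℤ) := by push_cast; ring
  rw [hcast, sum_cast (2*h) (fun a => Wt h (a * (ℓ:ℤ)))]
  have hVt : ∑ a ∈ Finset.Icc 1 (2*h), Wt h ((a:ℤ) * (ℓ:ℤ))
      = ((∑ a ∈ Finset.Icc 1 (2*h), Vt h ((a:ℤ) * (ℓ:ℤ)) : ℤ) : ℝ) := by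
    rw [Int.cast_sum]
    exact Finset.sum_congr rfl (fun a _ => wt_eq h _)
  rw [hVt]
  have hkey := key h ℓ hℓ
  have hkey' : |((∑ a ∈ Finset.Icc 1 (2*h), Vt h ((a:ℤ) * (ℓ:ℤ)) : ℤ) : ℝ)| ≤ 2*(h:ℝ) := by
    rw [← Int.cast_abs]
    exact_mod_cast hkey
  rw [abs_mul]
  have : |(2:ℝ)| = 2 := by norm_num
  rw [this]
  linarith
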